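/- If f : [0,1] → X is Bochner integrable, then f is McShane integrable and the integrals coincide. -/

import Mathlib

open Filter Topology MeasureTheory Set

variable {X : Type*} [NormedAddCommGroup X] [NormedSpace ℝ X]

/-- The Riemann sum of `f` for the partition `0 = p 0 < ⋯ < p n = 1` with tags `c`. -/
def riemannSum (f : ℝ → X) (n : ℕ) (p c : ℕ → ℝ) : X :=
  ∑ i ∈ Finset.range n, (p (i + 1) - p i) • f (c i)

/-- `p, c` is a δ-fine *free* tagged partition of `[0,1]`: the tags `c i ∈ [0,1]` need
not belong to their intervals, but `[p i, p (i+1)] ⊆ (c i - δ (c i), c i + δ (c i))`. -/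
def IsFreeTaggedPartition (n : ℕ) (p c : ℕ → ℝ) (δ : ℝ → ℝ) : Prop :=
  p 0 = 0 ∧ p n = 1 ∧ (∀ i < n, p i < p (i + 1)) ∧
  (∀ i < n, c i ∈ Icc (0 : ℝ) 1 ∧
    Icc (p i) (p (i + 1)) ⊆ Ioo (c i - δ (c i)) (c i + δ (c i)))

/-- `f : [0,1] → X` is McShane integrable with integral `x`. -/
def McShaneIntegrable (f : ℝ → X) (x : X) : Prop :=
  ∀ ε > (0 : ℝ), ∃ δ : ℝ → ℝ, (∀ t, 0 < δ t) ∧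
    ∀ (n : ℕ) (p c : ℕ → ℝ), IsFreeTaggedPartition n p c δ →
      ‖riemannSum f n p c - x‖ < ε

set_option maxHeartbeats 1000000 in
/-- Every Bochner integrable function `f : [0,1] → X` is McShane integrable, and the
McShane integral coincides with the Bochner integral. -/
theorem mcShane_of_bochner [CompleteSpace X] (f : ℝ → X)
    (hf : IntegrableOn f (Icc (0 : ℝ) 1) volume) :
    McShaneIntegrable f (∫ t in Icc (0 : ℝ) 1, f t) := by
  classical
  -- Setup: transfer to a 1-dimensional box integral.
  set e : (Fin 1 → ℝ) ≃ᵐ ℝ := MeasurableEquiv.funUnique (Fin 1) ℝ with he_def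
  have he : ∀ x : Fin 1 → ℝ, e x = x 0 := fun x => rfl
  have hvol : MeasurePreserving e volume volume := volume_preserving_funUnique (Fin 1) ℝ
  set g : (Fin 1 → ℝ) → X := fun x => f (x 0) with hg_def
  set I : BoxIntegral.Box (Fin 1) := ⟨fun _ => 0, fun _ => 1, fun _ => one_pos⟩ with hI_def
  have hIset : (I : Set (Fin 1 → ℝ)) = e ⁻¹' Ioc (0 : ℝ) 1 := by
    ext x
    simp only [BoxIntegral.Box.mem_coe, BoxIntegral.Box.mem_def, mem_preimage, he, hI_def]
    constructor
    · exact fun h => h 0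
    · intro h i
      have : i = 0 := Subsingleton.elim _ _
      rw [this]; exact h
  have hgint : IntegrableOn g (I : Set (Fin 1 → ℝ)) volume := by
    rw [hIset]
    exact (hvol.integrableOn_comp_preimage e.measurableEmbedding).2
      (hf.mono_set Ioc_subset_Icc_self)
  have hval : (∫ x in (I : Set (Fin 1 → ℝ)), g x) = ∫ t in Icc (0 : ℝ) 1, f t := by
    rw [hIset]
    have : (∫ x in e ⁻¹' Ioc (0 : ℝ) 1, f (e x)) = ∫ t in Ioc (0 : ℝ) 1, f t :=
      hvol.setIntegral_preimage_emb e.measurableEmbedding f _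
    rw [show (∫ x in e ⁻¹' Ioc (0 : ℝ) 1, g x) = ∫ x in e ⁻¹' Ioc (0 : ℝ) 1, f (e x) from rfl,
      this, MeasureTheory.integral_Icc_eq_integral_Ioc]
  have hbox : BoxIntegral.HasIntegral I BoxIntegral.IntegrationParams.McShane g
      (volume : Measure (Fin 1 → ℝ)).toBoxAdditive.toSMul
      (∫ x in (I : Set (Fin 1 → ℝ)), g x) :=
    MeasureTheory.IntegrableOn.hasBoxIntegral hgint BoxIntegral.IntegrationParams.McShane rfl
  rw [hval] at hbox
  -- ε-δ characterization
  intro ε hε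
  obtain ⟨r, -, H⟩ := BoxIntegral.hasIntegral_iff.1 hbox (ε / 2) (half_pos hε)
  refine ⟨fun t => r 1 (fun _ => t), fun t => (r 1 fun _ => t).2, ?_⟩
  rintro n p c ⟨hp0, hpn, hplt, htag⟩
  -- basic facts about p
  have hmono : ∀ ⦃i j : ℕ⦄, i ≤ j → j ≤ n → p i ≤ p j := by
    intro i j hij hjn
    induction hij with
    | refl => exact le_rfl
    | @step k hk ih =>
        exact (ih (by omega)).trans (hplt k (by omega)).le
  have hinj : ∀ i < n, ∀ j < n, p i = p j → i = j := by
    intro i hi j hj hpij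
    by_contra hne
    rcases Nat.lt_or_ge i j with h | h
    · have : p i < p j := (hplt i hi).trans_le (hmono h hj.le)
      exact absurd hpij this.ne
    · have hj' : j < i := by omega
      have : p j < p i := (hplt j hj).trans_le (hmono hj' (by omega))
      exact absurd hpij.symm this.ne
  -- the boxes
  set B : ℕ → BoxIntegral.Box (Fin 1) := fun i =>
    if h : p i < p (i + 1) then ⟨fun _ => p i, fun _ => p (i + 1), fun _ => h⟩ else I with hB_def
  have hBl : ∀ i < n, (B i).lower = fun _ => p i := by
    intro i hi; simp only [hB_def, dif_pos (hplt i hi)]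
  have hBu : ∀ i < n, (B i).upper = fun _ => p (i + 1) := by
    intro i hi; simp only [hB_def, dif_pos (hplt i hi)]
  have hBmem : ∀ i < n, ∀ x : Fin 1 → ℝ, x ∈ B i ↔ x 0 ∈ Ioc (p i) (p (i + 1)) := by
    intro i hi x
    simp only [BoxIntegral.Box.mem_def, hBl i hi, hBu i hi]
    constructor
    · exact fun h => h 0
    · intro h j; have : j = 0 := Subsingleton.elim _ _; rw [this]; exact h
  have hBinj : ∀ i < n, ∀ j < n, B i = B j → i = j := by
    intro i hi j hj hij
    apply hinj i hi j hj
    have := congrArg BoxIntegral.Box.lower hij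
    rw [hBl i hi, hBl j hj] at this
    exact congrFun this 0
  -- the tags
  set tag : BoxIntegral.Box (Fin 1) → (Fin 1 → ℝ) := fun J =>
    if h : ∃ i, i < n ∧ J = B i then (fun _ => c h.choose) else fun _ => 0 with htag_def
  have htagB : ∀ i < n, tag (B i) = fun _ => c i := by
    intro i hi
    have hex : ∃ j, j < n ∧ B i = B j := ⟨i, hi, rfl⟩
    simp only [htag_def, dif_pos hex]
    obtain ⟨hj, hBj⟩ := hex.choose_spec
    exact funext fun _ => congrArg c (hBinj i hi _ hj hBj).symm
  -- building the tagged prepartition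
  have hle : ∀ J ∈ (Finset.range n).image B, J ≤ I := by
    intro J hJ
    obtain ⟨i, hi, rfl⟩ := Finset.mem_image.1 hJ
    rw [Finset.mem_range] at hi
    rw [BoxIntegral.Box.le_iff_bounds, hBl i hi, hBu i hi]
    constructor
    · intro j; simpa [hI_def, hp0] using hmono (Nat.zero_le i) (by omega)
    · intro j; simpa [hI_def, ← hpn] using hmono (show i + 1 ≤ n by omega) le_rfl
  have hdisj : ((Finset.range n).image B : Set (BoxIntegral.Box (Fin 1))).Pairwise
      (Function.onFun Disjoint fun J : BoxIntegral.Box (Fin 1) => (J : Set (Fin 1 → ℝ))) := by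
    intro J₁ hJ₁ J₂ hJ₂ hne
    simp only [Finset.coe_image, Finset.coe_range, mem_image, mem_Iio] at hJ₁ hJ₂
    obtain ⟨i, hi, rfl⟩ := hJ₁
    obtain ⟨j, hj, rfl⟩ := hJ₂
    have hij : i ≠ j := fun h => hne (by rw [h])
    have key : ∀ i' j', i' < n → j' < n → i' < j' →
        Disjoint ((B i' : Set (Fin 1 → ℝ))) (B j') := by
      intro i' j' hi' hj' hlt
      rw [Set.disjoint_left]
      intro x hx₁ hx₂
      rw [BoxIntegral.Box.mem_coe, hBmem i' hi' x] at hx₁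
      rw [BoxIntegral.Box.mem_coe, hBmem j' hj' x] at hx₂
      have h1 : x 0 ≤ p (i' + 1) := hx₁.2
      have h2 : p j' < x 0 := hx₂.1
      have : p (i' + 1) ≤ p j' := hmono (by omega) hj'.le
      linarith
    rcases Nat.lt_or_ge i j with h | h
    · exact key i j hi hj h
    · exact (key j i hj hi (by omega)).symm
  set π : BoxIntegral.TaggedPrepartition I :=
    { boxes := (Finset.range n).image B
      le_of_mem' := hle
      pairwiseDisjoint := hdisj
      tag := tag
      tag_mem_Icc := by
        intro J
        rw [BoxIntegral.Box.Icc_def, Set.mem_Icc, Pi.le_def, Pi.le_def]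
        simp only [htag_def]
        split
        · next h =>
            obtain ⟨hlt, -⟩ := h.choose_spec
            have hc := (htag _ hlt).1
            constructor <;> intro j <;> simp [hI_def, hc.1, hc.2]
        · constructor <;> intro j <;> simp [hI_def] } with hπ_def
  -- π is a partition
  have hcover : ∀ m ≤ n, ∀ t ∈ Ioc (p 0) (p m), ∃ i < m, t ∈ Ioc (p i) (p (i + 1)) := by
    intro m
    induction m with
    | zero => intro _ t ht; exact absurd (ht.1.trans_le ht.2) (lt_irrefl _)
    | succ k ih =>
        intro hm t ht
        by_cases h : t ≤ p k
        · obtain ⟨i, hi, h2⟩ := ih (by omega) t ⟨ht.1, h⟩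
          exact ⟨i, by omega, h2⟩
        · exact ⟨k, by omega, ⟨not_le.1 h, ht.2⟩⟩
  have hpart : π.IsPartition := by
    rw [BoxIntegral.TaggedPrepartition.isPartition_iff_iUnion_eq]
    ext x
    rw [BoxIntegral.TaggedPrepartition.mem_iUnion]
    constructor
    · rintro ⟨J, hJ, hx⟩
      obtain ⟨i, hi, rfl⟩ := Finset.mem_image.1 hJ
      rw [Finset.mem_range] at hi
      rw [hBmem i hi] at hx
      rw [BoxIntegral.Box.mem_coe, BoxIntegral.Box.mem_def]
      intro j
      have hj0 : j = 0 := Subsingleton.elim _ _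
      rw [hj0]
      simp only [hI_def]
      constructor
      · calc (0 : ℝ) = p 0 := hp0.symm
          _ ≤ p i := hmono (Nat.zero_le i) (by omega)
          _ < x 0 := hx.1
      · calc x 0 ≤ p (i + 1) := hx.2
          _ ≤ p n := hmono (by omega) le_rfl
          _ = 1 := hpn
    · intro hx
      rw [BoxIntegral.Box.mem_coe, BoxIntegral.Box.mem_def] at hx
      have hx0 := hx 0
      simp only [hI_def] at hx0
      obtain ⟨i, hi, h2⟩ := hcover n le_rfl (x 0) (by rw [hp0, hpn]; exact hx0)
      exact ⟨B i, Finset.mem_image.2 ⟨i, Finset.mem_range.2 hi, rfl⟩, (hBmem i hi x).2 h2⟩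
  -- π is subordinate to r 1
  have hsub : π.IsSubordinate (r 1) := by
    intro J hJ
    obtain ⟨i, hi, rfl⟩ := Finset.mem_image.1 hJ
    rw [Finset.mem_range] at hi
    intro x hx
    rw [BoxIntegral.Box.Icc_def, Set.mem_Icc, hBl i hi, hBu i hi] at hx
    have hx0 : x 0 ∈ Icc (p i) (p (i + 1)) := ⟨hx.1 0, hx.2 0⟩
    have hIoo := (htag i hi).2 hx0
    have htg : π.tag (B i) = fun _ => c i := htagB i hi
    rw [Metric.mem_closedBall, htg]
    have hrpos : (0 : ℝ) ≤ r 1 (fun _ => c i) := (r 1 fun _ => c i).2.le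
    rw [dist_pi_le_iff hrpos]
    intro j
    have hj0 : j = 0 := Subsingleton.elim _ _
    rw [hj0]
    rw [Real.dist_eq, abs_sub_le_iff]
    constructor <;> [linarith [hIoo.2]; linarith [hIoo.1]]
  -- membership in base set for the McShane filter
  have hmem : BoxIntegral.IntegrationParams.MemBaseSet
      BoxIntegral.IntegrationParams.McShane I 1 (r 1) π := by
    refine ⟨hsub, ?_, ?_, ?_⟩
    · intro h; exact absurd h (by decide)
    · intro h; exact absurd h (by decide)
    · intro h; exact absurd h (by decide)
  have hdist := H 1 π hmem hpart
  -- compute the integral sum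
  have hsum : BoxIntegral.integralSum g (volume : Measure (Fin 1 → ℝ)).toBoxAdditive.toSMul π
      = riemannSum f n p c := by
    rw [BoxIntegral.integralSum, riemannSum]
    rw [Finset.sum_image (fun i hi j hj hij =>
      hBinj i (Finset.mem_range.1 hi) j (Finset.mem_range.1 hj) hij)]
    refine Finset.sum_congr rfl fun i hi => ?_
    rw [Finset.mem_range] at hi
    have hvolB : (volume : Measure (Fin 1 → ℝ)).toBoxAdditive (B i) = p (i + 1) - p i := by
      rw [BoxIntegral.Box.volume_apply, hBl i hi, hBu i hi]
      simp
    have : g (π.tag (B i)) = f (c i) := by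
      rw [show π.tag = tag from rfl, htagB i hi]
    rw [BoxIntegral.BoxAdditiveMap.toSMul_apply, hvolB, this]
  rw [hsum] at hdist
  rw [dist_eq_norm] at hdist
  calc ‖riemannSum f n p c - ∫ t in Icc (0 : ℝ) 1, f t‖ ≤ ε / 2 := hdist
    _ < ε := half_lt_self hε
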